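/- Let (α_n)_{n≥0} be a sequence of positive reals such that α_n² is a polynomial in n of degree 4, and suppose there is a polynomial φ of degree 2 in n with leading coefficient 2 such that α_n + α_{n-1} = φ(n) for all n ≥ 1. Then α_n is a polynomial in n of degree 2 (with leading coefficient 1): α_n = n² + Bn + A for some constants A, B. -/
import Mathlib


/-- if `(α_n)` is a sequence of positive reals such that `α_n²` is a
polynomial in `n` of degree 4, and `α_n + α_{n-1} = φ(n)` for all `n ≥ 1` for some
polynomial `φ` of degree 2 with leading coefficient 2, then `α_n = n² + Bn + A`. -/
theorem stmt6 (α : ℕ → ℝ) (hpos : ∀ n : ℕ, 0 < α n)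
    (p : Polynomial ℝ) (hpdeg : p.degree = 4)
    (hp : ∀ n : ℕ, (α n) ^ 2 = p.eval (n : ℝ))
    (φ : Polynomial ℝ) (hφdeg : φ.degree = 2) (hφlead : φ.leadingCoeff = 2)
    (hrec : ∀ n : ℕ, 1 ≤ n → α n + α (n - 1) = φ.eval (n : ℝ)) :
    ∃ A B : ℝ, ∀ n : ℕ, α n = (n : ℝ) ^ 2 + B * (n : ℝ) + A := by
  have hnd : φ.natDegree = 2 := Polynomial.natDegree_eq_of_degree_eq_some hφdeg
  set b := φ.coeff 1 with hb
  set c := φ.coeff 0 with hc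
  have h2 : φ.coeff 2 = 2 := by
    rw [show (2:ℕ) = φ.natDegree from hnd.symm, Polynomial.coeff_natDegree, hφlead]
  have heval : ∀ x : ℝ, φ.eval x = c + b * x + 2 * x ^ 2 := by
    intro x
    rw [Polynomial.eval_eq_sum_range, hnd]
    simp [Finset.sum_range_succ, h2]
    try ring
  set B := (b + 2) / 2 with hB
  set A := (c - 1) / 2 + (b + 2) / 4 with hA
  set β : ℕ → ℝ := fun n => (n:ℝ)^2 + B * n + A with hβ
  set C := α 0 - A with hCdef
  have key : ∀ n, α n = β n + (-1)^n * C := by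
    intro n
    induction n with
    | zero => simp [hβ, hCdef]
    | succ n ih =>
      have h := hrec (n+1) (by omega)
      simp only [Nat.add_sub_cancel] at h
      have h1 : α (n+1) = φ.eval ((n:ℝ)+1) - α n := by push_cast at h ⊢; linarith
      rw [h1, ih, heval]
      simp only [hβ, hB, hA]
      push_cast
      ring
  by_cases hCz : C = 0
  · refine ⟨A, B, fun n => ?_⟩
    rw [key n, hCz]
    simp [hβ]
  · exfalso
    set s : Polynomial ℝ := Polynomial.X^2 + Polynomial.C B * Polynomial.X + Polynomial.C A with hs
    have hseval : ∀ n : ℕ, s.eval (n:ℝ) = β n := by intro n; simp [hs, hβ]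
    set q : Polynomial ℝ := p - s^2 - Polynomial.C (C^2) with hq
    have hqe : ∀ n : ℕ, q.eval (n:ℝ) = 2 * C * (-1)^n * β n := by
      intro n
      have h1 := hp n
      rw [key n] at h1
      have hsq : ((-1:ℝ)^n)^2 = 1 := by
        rw [← pow_mul, mul_comm, pow_mul]; simp
      have : q.eval (n:ℝ) = p.eval (n:ℝ) - (β n)^2 - C^2 := by
        simp [hq, hseval n]
      rw [this, ← h1]
      nlinarith [hsq]
    set r : Polynomial ℝ := q^2 - Polynomial.C (4*C^2) * s^2 with hr
    have hr0 : r = 0 := by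
      apply Polynomial.eq_zero_of_infinite_isRoot
      refine Set.infinite_of_injective_forall_mem (f := fun n : ℕ => (n:ℝ))
        (fun a b hab => Nat.cast_injective hab) ?_
      intro n
      show r.IsRoot (n:ℝ)
      have hsq : ((-1:ℝ)^n)^2 = 1 := by
        rw [← pow_mul, mul_comm, pow_mul]; simp
      simp only [Polynomial.IsRoot, hr, Polynomial.eval_sub, Polynomial.eval_pow,
        Polynomial.eval_mul, Polynomial.eval_C, hqe n, hseval n]
      nlinarith [hsq]
    have hc2 : Polynomial.C (4*C^2) = Polynomial.C (2*C) * Polynomial.C (2*C) := by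
      rw [← Polynomial.C_mul]; ring_nf
    have hfac : (q - Polynomial.C (2*C) * s) * (q + Polynomial.C (2*C) * s) = 0 := by
      rw [hr, hc2] at hr0
      linear_combination hr0
    have hs2 : s.coeff 2 = 1 := by
      simp [hs, Polynomial.coeff_X, Polynomial.coeff_C]
    rcases mul_eq_zero.mp hfac with h | h
    · -- q = 2C s, so at odd n, β n = 0
      have hqs : q = Polynomial.C (2*C) * s := by linear_combination h
      have hodd : ∀ k : ℕ, s.eval ((2*k+1 : ℕ) : ℝ) = 0 := by
        intro k
        have h1 := hqe (2*k+1)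
        rw [hqs] at h1
        simp only [Polynomial.eval_mul, Polynomial.eval_C, hseval] at h1
        have hneg : ((-1:ℝ))^(2*k+1) = -1 := by
          rw [pow_succ, pow_mul]; simp
        rw [hneg] at h1
        rw [hseval]
        have : 4 * C * β (2*k+1) = 0 := by linarith
        have := mul_eq_zero.mp this
        rcases this with h' | h'
        · exact absurd (by linarith : C = 0) hCz
        · exact h'
      have hs0 : s = 0 := by
        apply Polynomial.eq_zero_of_infinite_isRoot
        refine Set.infinite_of_injective_forall_mem (f := fun k : ℕ => ((2*k+1 : ℕ) : ℝ))
          (fun a b' hab => by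
            have : (2*a+1 : ℕ) = 2*b'+1 := Nat.cast_injective hab
            omega) ?_
        intro k; exact hodd k
      rw [hs0] at hs2; simp at hs2
    · have hqs : q = - (Polynomial.C (2*C) * s) := by linear_combination h
      have heven : ∀ k : ℕ, s.eval ((2*k : ℕ) : ℝ) = 0 := by
        intro k
        have h1 := hqe (2*k)
        rw [hqs] at h1
        simp only [Polynomial.eval_neg, Polynomial.eval_mul, Polynomial.eval_C, hseval] at h1
        have hneg : ((-1:ℝ))^(2*k) = 1 := by rw [pow_mul]; simp
        rw [hneg] at h1
        rw [hseval]
        have : 4 * C * β (2*k) = 0 := by linarith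
        rcases mul_eq_zero.mp this with h' | h'
        · exact absurd (by linarith : C = 0) hCz
        · exact h'
      have hs0 : s = 0 := by
        apply Polynomial.eq_zero_of_infinite_isRoot
        refine Set.infinite_of_injective_forall_mem (f := fun k : ℕ => ((2*k : ℕ) : ℝ))
          (fun a b' hab => by
            have : (2*a : ℕ) = 2*b' := Nat.cast_injective hab
            omega) ?_
        intro k; exact heven k
      rw [hs0] at hs2; simp at hs2
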